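/- Let n and d be natural numbers with n ≥ 100 and 2 ≤ d ≤ n. Then (d/(d-1))·(2n)^{-1/d} + 1/d ≤ 1 - (ln n)/(2n), where (2n)^{-1/d} denotes the real power and ln is the natural logarithm. -/

import Mathlib

open Real

/-- Quadratic upper bound for `exp (-t)` when `t ≥ 0`. -/
lemma quad_exp_neg (t : ℝ) (ht : 0 ≤ t) : Real.exp (-t) ≤ 1 - t + t ^ 2 / 2 := by
  have h1 : 1 + t + t ^ 2 / 2 ≤ Real.exp t := Real.quadratic_le_exp_of_nonneg ht
  have hpos : (0 : ℝ) < 1 + t + t ^ 2 / 2 := by nlinarith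
  have h2 : Real.exp (-t) ≤ (1 + t + t ^ 2 / 2)⁻¹ := by
    rw [Real.exp_neg]
    exact inv_anti₀ hpos h1
  have h3 : (1 + t + t ^ 2 / 2)⁻¹ ≤ 1 - t + t ^ 2 / 2 := by
    rw [inv_le_iff_one_le_mul₀ hpos]
    nlinarith [sq_nonneg t, sq_nonneg (t ^ 2)]
  linarith

lemma exp_525_le : Real.exp 5.25 ≤ 200 := by
  have hx : (1 : ℝ) - 5.25 / 512 ≤ Real.exp (-(5.25 / 512)) := by
    have := Real.add_one_le_exp (-(5.25 / 512)); linarith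
  have h0 : (0 : ℝ) ≤ 1 - 5.25 / 512 := by norm_num
  have hpow : ((1 : ℝ) - 5.25 / 512) ^ (512 : ℕ) ≤ Real.exp (-(5.25 / 512)) ^ (512 : ℕ) :=
    pow_le_pow_left₀ h0 hx 512
  have heq : Real.exp (-(5.25 / 512)) ^ (512 : ℕ) = Real.exp (-5.25) := by
    rw [← Real.exp_nat_mul]; norm_num
  rw [heq] at hpow
  have hkey : ((1 : ℝ) - 5.25 / 512) ^ (512 : ℕ) * 200 ≥ 1 := by
    rw [show (512:ℕ) = 8*64 from rfl, pow_mul]; norm_num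
  have h1 : Real.exp 5.25 * Real.exp (-5.25) = 1 := by
    rw [← Real.exp_add]; norm_num
  generalize ((1 : ℝ) - 5.25 / 512) ^ (512 : ℕ) = P at hpow hkey
  nlinarith [Real.exp_pos (5.25 : ℝ), Real.exp_pos (-(5.25:ℝ))]

lemma log200_ge : (5.25 : ℝ) ≤ Real.log 200 :=
  (Real.le_log_iff_exp_le (by norm_num)).2 exp_525_le

lemma log200_le : Real.log 200 ≤ 6.1 := by
  rw [Real.log_le_iff_le_exp (by norm_num)]
  have hx : (1 : ℝ) + 6.1 / 64 ≤ Real.exp (6.1 / 64) := by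
    have := Real.add_one_le_exp ((6.1 : ℝ) / 64); linarith
  have hpow : ((1 : ℝ) + 6.1 / 64) ^ (64 : ℕ) ≤ Real.exp (6.1 / 64) ^ (64 : ℕ) :=
    pow_le_pow_left₀ (by norm_num) hx 64
  have heq : Real.exp ((6.1 : ℝ) / 64) ^ (64 : ℕ) = Real.exp 6.1 := by
    rw [← Real.exp_nat_mul]; norm_num
  have hnum : (200 : ℝ) ≤ ((1 : ℝ) + 6.1 / 64) ^ (64 : ℕ) := by norm_num
  rw [heq] at hpow
  linarith

lemma log100_le : Real.log 100 ≤ 4.7 := by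
  rw [Real.log_le_iff_le_exp (by norm_num)]
  have hx : (1 : ℝ) + 4.7 / 256 ≤ Real.exp (4.7 / 256) := by
    have := Real.add_one_le_exp ((4.7 : ℝ) / 256); linarith
  have hpow : ((1 : ℝ) + 4.7 / 256) ^ (256 : ℕ) ≤ Real.exp (4.7 / 256) ^ (256 : ℕ) :=
    pow_le_pow_left₀ (by norm_num) hx 256
  have heq : Real.exp ((4.7 : ℝ) / 256) ^ (256 : ℕ) = Real.exp 4.7 := by
    rw [← Real.exp_nat_mul]; norm_num
  have hnum : (100 : ℝ) ≤ ((1 : ℝ) + 4.7 / 256) ^ (256 : ℕ) := by norm_num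
  rw [heq] at hpow
  linarith

/-- `(log m)^2 ≤ 0.19 m` for `m ≥ 200`. -/
lemma log_sq_le (m : ℝ) (hm : 200 ≤ m) : Real.log m ^ 2 ≤ 0.19 * m := by
  have hm0 : (0 : ℝ) < m := by linarith
  set v := Real.log m - Real.log 200 with hv
  have hv0 : 0 ≤ v := sub_nonneg.2 (Real.log_le_log (by norm_num) hm)
  have hev : Real.exp v = m / 200 := by
    rw [hv, Real.exp_sub, Real.exp_log hm0, Real.exp_log (by norm_num : (0:ℝ) < 200)]
  have hq : 1 + v / 2 ≤ Real.exp (v / 2) := by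
    have := Real.add_one_le_exp (v / 2); linarith
  have hsq : (1 + v / 2) ^ 2 ≤ m / 200 := by
    have h1 : (1 + v / 2) ^ 2 ≤ Real.exp (v / 2) ^ 2 :=
      pow_le_pow_left₀ (by linarith) hq 2
    have h2 : Real.exp (v / 2) ^ 2 = Real.exp v := by
      rw [sq, ← Real.exp_add]; ring_nf
    rw [h2, hev] at h1; exact h1
  have hlm : Real.log m ≤ 6.1 * (1 + v / 2) := by
    have : Real.log m = Real.log 200 + v := by rw [hv]; ring
    have h200 := log200_le
    linarith
  have hlm0 : 0 ≤ Real.log m := by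
    have := log200_ge
    have : Real.log 200 ≤ Real.log m := Real.log_le_log (by norm_num) hm
    linarith [log200_ge]
  nlinarith [sq_nonneg (1 + v / 2)]

/-- `log N / (2N) ≤ 2/27` for `N ≥ 100`. -/
lemma A_le (N : ℝ) (hN : 100 ≤ N) : Real.log N / (2 * N) ≤ 2 / 27 := by
  have hN0 : (0 : ℝ) < N := by linarith
  set v := Real.log N - Real.log 100 with hv
  have hv0 : 0 ≤ v := sub_nonneg.2 (Real.log_le_log (by norm_num) hN)
  have hev : Real.exp v = N / 100 := by
    rw [hv, Real.exp_sub, Real.exp_log hN0, Real.exp_log (by norm_num : (0:ℝ) < 100)]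
  have h1v : 1 + v ≤ N / 100 := by
    have := Real.add_one_le_exp v; rw [hev] at *; linarith
  have hlm : Real.log N ≤ 4.7 + v := by
    have : Real.log N = Real.log 100 + v := by rw [hv]; ring
    linarith [log100_le]
  rw [div_le_iff₀ (by linarith : (0:ℝ) < 2 * N)]
  linarith

set_option maxHeartbeats 2000000 in
theorem lp2ub_nb (n d : ℕ) (hn : 100 ≤ n) (hd2 : 2 ≤ d) (hdn : d ≤ n) :
    (d : ℝ) / ((d : ℝ) - 1) * (2 * (n : ℝ)) ^ (-(1 : ℝ) / d) + 1 / d ≤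
      1 - Real.log n / (2 * n) := by
  have hN : (100 : ℝ) ≤ (n : ℝ) := by exact_mod_cast hn
  have hdR : (2 : ℝ) ≤ (d : ℝ) := by exact_mod_cast hd2
  have hdN : (d : ℝ) ≤ (n : ℝ) := by exact_mod_cast hdn
  have hN0 : (0 : ℝ) < (n : ℝ) := by linarith
  have hd0 : (0 : ℝ) < (d : ℝ) := by linarith
  have h2N0 : (0 : ℝ) < 2 * (n : ℝ) := by linarith
  set L : ℝ := Real.log (2 * (n : ℝ)) with hLdef
  set A : ℝ := Real.log (n : ℝ) / (2 * (n : ℝ)) with hAdef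
  have hx : (2 * (n : ℝ)) ^ (-(1 : ℝ) / d) = Real.exp (-(L / d)) := by
    rw [Real.rpow_def_of_pos h2N0]
    congr 1
    field_simp
    rw [hLdef]
  rw [hx]
  have hL200 : Real.log 200 ≤ L := by
    rw [hLdef]; exact Real.log_le_log (by norm_num) (by linarith)
  have hL : (5.25 : ℝ) ≤ L := le_trans log200_ge hL200
  have hLsq : L ^ 2 ≤ 0.38 * (n : ℝ) := by
    have h := log_sq_le (2 * (n : ℝ)) (by linarith)
    rw [← hLdef] at h
    linarith
  have hA0 : 0 ≤ A := by
    rw [hAdef]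
    exact div_nonneg (Real.log_nonneg (by linarith)) (by linarith)
  have hA27 : A ≤ 2 / 27 := by rw [hAdef]; exact A_le _ hN
  have hlogn_le : Real.log (n : ℝ) ≤ L := by
    rw [hLdef]; exact Real.log_le_log hN0 (by linarith)
  have hlog2 : L = Real.log 2 + Real.log (n : ℝ) := by
    rw [hLdef]; exact Real.log_mul (by norm_num) (ne_of_gt hN0)
  have hln2 : (0.693 : ℝ) ≤ Real.log 2 := by linarith [Real.log_two_gt_d9]
  -- Key claim
  have hS : Real.exp (-(L / d)) ≤ (1 - 1 / (d : ℝ)) ^ 2 - A := by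
    rcases eq_or_lt_of_le hd2 with h2 | h3
    · -- d = 2
      have hd2' : (d : ℝ) = 2 := by exact_mod_cast h2.symm
      rw [hd2']
      have hsq : Real.exp (-(L / 2)) ^ 2 = 1 / (2 * (n : ℝ)) := by
        rw [sq, ← Real.exp_add]
        have h : -(L / 2) + -(L / 2) = -L := by ring
        rw [h, Real.exp_neg, hLdef, Real.exp_log h2N0, one_div]
      have hpos : 0 < Real.exp (-(L / 2)) := Real.exp_pos _
      have hle : (1 : ℝ) / (2 * (n : ℝ)) ≤ 1 / 200 := by
        apply one_div_le_one_div_of_le <;> linarith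
      have h14 : Real.exp (-(L / 2)) ≤ 1 / 14 := by nlinarith
      have : (1 - 1 / (2 : ℝ)) ^ 2 = 1 / 4 := by norm_num
      linarith
    · have hd3 : (3 : ℝ) ≤ (d : ℝ) := by exact_mod_cast h3
      by_cases hdL : (d : ℝ) ≤ L
      · -- small d : exp(-L/d) ≤ exp(-1)
        have h1 : (1 : ℝ) ≤ L / d := (le_div_iff₀ hd0).2 (by linarith)
        have he : Real.exp (-(L / d)) ≤ Real.exp (-1) := Real.exp_le_exp.2 (by linarith)
        have h0 : Real.exp (-1) * Real.exp 1 = 1 := by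
          rw [← Real.exp_add]; norm_num
        have hei : Real.exp (-1 : ℝ) ≤ 10 / 27 := by
          nlinarith [Real.exp_pos (-1 : ℝ), Real.exp_one_gt_d9]
        have hq : (2 / 3 : ℝ) ≤ 1 - 1 / (d : ℝ) := by
          have : (1 : ℝ) / d ≤ 1 / 3 := one_div_le_one_div_of_le (by norm_num) hd3
          linarith
        have hsq : (4 / 9 : ℝ) ≤ (1 - 1 / (d : ℝ)) ^ 2 := by nlinarith
        linarith
      · push_neg at hdL
        have ht : Real.exp (-(L / d)) ≤ 1 - L / d + (L / d) ^ 2 / 2 :=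
          quad_exp_neg _ (by positivity)
        have hL0 : (0 : ℝ) ≤ L := by linarith
        have key : A * (d : ℝ) ^ 2 + L ^ 2 / 2 + 2 * d ≤ L * d + 1 := by
          by_cases h3L : (d : ℝ) ≤ 3 * L
          · -- L < d ≤ 3L
            have h1 : Real.log (n : ℝ) * d ≤ 1.14 * (n : ℝ) := by
              have a1 : Real.log (n : ℝ) * d ≤ L * d :=
                mul_le_mul_of_nonneg_right hlogn_le hd0.le
              have a2 : L * d ≤ L * (3 * L) := mul_le_mul_of_nonneg_left h3L hL0
              nlinarith [hLsq]
            have hAd : A * d ≤ 0.57 := by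
              rw [hAdef, div_mul_eq_mul_div, div_le_iff₀ h2N0]
              linarith
            have hAd2 : A * d * d ≤ 0.57 * d := mul_le_mul_of_nonneg_right hAd hd0.le
            have hprod : 0 ≤ ((d : ℝ) - L) * (L - 2.57) :=
              mul_nonneg (by linarith) (by linarith)
            nlinarith [sq_nonneg (L - 5.25)]
          · -- d > 3L
            push_neg at h3L
            have e2 : (L - Real.log 2) * (n : ℝ) = Real.log (n : ℝ) * n := by
              rw [hlog2]; ring
            have h1 : A * d ≤ (L - Real.log 2) / 2 := by
              rw [hAdef, div_mul_eq_mul_div, div_le_iff₀ h2N0]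
              have a1 : Real.log (n : ℝ) * d ≤ Real.log (n : ℝ) * n :=
                mul_le_mul_of_nonneg_left hdN (Real.log_nonneg (by linarith))
              nlinarith [a1, e2]
            have hAd2 : A * d * d ≤ (L - Real.log 2) / 2 * d :=
              mul_le_mul_of_nonneg_right h1 hd0.le
            have hLL : L * (3 * L) ≤ L * d := mul_le_mul_of_nonneg_left h3L.le hL0
            have hc : 0 ≤ (d : ℝ) * (L / 3 + Real.log 2 / 2 - 2) :=
              mul_nonneg hd0.le (by linarith)
            nlinarith [hc, hAd2, hLL]
        have expand : (1 - 1 / (d : ℝ)) ^ 2 - A - (1 - L / d + (L / d) ^ 2 / 2)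
            = (L * d - L ^ 2 / 2 + 1 - 2 * d - A * (d : ℝ) ^ 2) / (d : ℝ) ^ 2 := by
          field_simp
          ring
        have hnum : 0 ≤ L * d - L ^ 2 / 2 + 1 - 2 * d - A * (d : ℝ) ^ 2 := by linarith
        have hfin : 0 ≤ (L * d - L ^ 2 / 2 + 1 - 2 * d - A * (d : ℝ) ^ 2) / (d : ℝ) ^ 2 :=
          div_nonneg hnum (by positivity)
        linarith
  -- conclude from hS
  have hd1 : (0 : ℝ) < (d : ℝ) - 1 := by linarith
  have hfrac1 : (1 : ℝ) ≤ (d : ℝ) / ((d : ℝ) - 1) := by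
    rw [le_div_iff₀ hd1]; linarith
  have e1 : (d : ℝ) / ((d : ℝ) - 1) * (1 - 1 / (d : ℝ)) ^ 2 + 1 / (d : ℝ) = 1 := by
    field_simp
    ring
  have step1 : (d : ℝ) / ((d : ℝ) - 1) * Real.exp (-(L / d)) + 1 / d
      ≤ (d : ℝ) / ((d : ℝ) - 1) * ((1 - 1 / (d : ℝ)) ^ 2 - A) + 1 / d := by
    have := mul_le_mul_of_nonneg_left hS (by positivity : (0:ℝ) ≤ (d : ℝ) / ((d : ℝ) - 1))
    linarith
  have step2 : (d : ℝ) / ((d : ℝ) - 1) * ((1 - 1 / (d : ℝ)) ^ 2 - A) + 1 / d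
      = 1 - (d : ℝ) / ((d : ℝ) - 1) * A := by
    rw [mul_sub]; linarith
  have step3 : (1 : ℝ) - (d : ℝ) / ((d : ℝ) - 1) * A ≤ 1 - A := by
    nlinarith [mul_nonneg (sub_nonneg.2 hfrac1) hA0]
  linarith
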